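/- For every even nonnegative integer ℓ and every x ∈ (0,1), the integral ∫_0^1 (u^ℓ/√(1−x²u²)) · (1 − ((ℓ+2)/(ℓ+1)) x²u²) du is strictly positive; moreover it vanishes at x = 1 and is strictly decreasing in x on (0,1). -/

import Mathlib

open Real Set
open intervalIntegral MeasureTheory

lemma hasDerivAt_F (l : ℕ) (x u : ℝ) (h : x ^ 2 * u ^ 2 < 1) :
    HasDerivAt (fun u : ℝ => u ^ (l + 1) * Real.sqrt (1 - x ^ 2 * u ^ 2) / ((l : ℝ) + 1))
      (u ^ l / Real.sqrt (1 - x ^ 2 * u ^ 2) *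
        (1 - (((l : ℝ) + 2) / ((l : ℝ) + 1)) * x ^ 2 * u ^ 2)) u := by
  have hpos : 0 < 1 - x ^ 2 * u ^ 2 := by linarith
  have hs : 0 < Real.sqrt (1 - x ^ 2 * u ^ 2) := Real.sqrt_pos.2 hpos
  have hg : HasDerivAt (fun u : ℝ => 1 - x ^ 2 * u ^ 2) (-(x ^ 2 * (2 * u))) u := by
    simpa using ((hasDerivAt_pow 2 u).const_mul (x ^ 2)).const_sub 1
  have hsq : HasDerivAt (fun u : ℝ => Real.sqrt (1 - x ^ 2 * u ^ 2))
      (-(x ^ 2 * (2 * u)) / (2 * Real.sqrt (1 - x ^ 2 * u ^ 2))) u := by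
    have := (Real.hasDerivAt_sqrt (ne_of_gt hpos)).comp u hg
    simpa [div_eq_mul_inv, mul_comm, Function.comp_def] using this
  have hpow : HasDerivAt (fun u : ℝ => u ^ (l + 1)) (((l : ℝ) + 1) * u ^ l) u := by
    simpa using hasDerivAt_pow (l + 1) u
  have := ((hpow.mul hsq).div_const ((l : ℝ) + 1))
  refine this.congr_deriv ?_
  symm
  have hs2 : Real.sqrt (1 - x ^ 2 * u ^ 2) ^ 2 = 1 - x ^ 2 * u ^ 2 :=
    Real.sq_sqrt hpos.le
  have hl1 : ((l : ℝ) + 1) ≠ 0 := by positivity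
  set s := Real.sqrt (1 - x ^ 2 * u ^ 2) with hsdef
  field_simp
  linear_combination (-((l:ℝ)+1) * u ^ l) * hs2

lemma integral_eq_inner (l : ℕ) (x : ℝ) (hx : x ∈ Set.Ioo (0 : ℝ) 1) :
    (∫ u in (0 : ℝ)..1,
        u ^ l / Real.sqrt (1 - x ^ 2 * u ^ 2) *
          (1 - (((l : ℝ) + 2) / ((l : ℝ) + 1)) * x ^ 2 * u ^ 2)) =
      Real.sqrt (1 - x ^ 2) / ((l : ℝ) + 1) := by
  obtain ⟨hx0, hx1⟩ := hx
  have hx2 : x ^ 2 < 1 := by nlinarith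
  have key : ∀ u ∈ Set.uIcc (0 : ℝ) 1, x ^ 2 * u ^ 2 < 1 := by
    intro u hu
    rw [Set.uIcc_of_le (by norm_num)] at hu
    have hu2 : u ^ 2 ≤ 1 := by nlinarith [hu.1, hu.2]
    nlinarith [mul_le_of_le_one_right (sq_nonneg x) hu2]
  have hderiv : ∀ u ∈ Set.uIcc (0 : ℝ) 1,
      HasDerivAt (fun u : ℝ => u ^ (l + 1) * Real.sqrt (1 - x ^ 2 * u ^ 2) / ((l : ℝ) + 1))
        (u ^ l / Real.sqrt (1 - x ^ 2 * u ^ 2) *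
          (1 - (((l : ℝ) + 2) / ((l : ℝ) + 1)) * x ^ 2 * u ^ 2)) u :=
    fun u hu => hasDerivAt_F l x u (key u hu)
  have hcont : ContinuousOn (fun u : ℝ =>
      u ^ l / Real.sqrt (1 - x ^ 2 * u ^ 2) *
        (1 - (((l : ℝ) + 2) / ((l : ℝ) + 1)) * x ^ 2 * u ^ 2)) (Set.uIcc (0 : ℝ) 1) := by
    apply ContinuousOn.mul
    · apply ContinuousOn.div (continuousOn_pow l)
        (Continuous.continuousOn (by continuity))
      intro u hu
      exact ne_of_gt (Real.sqrt_pos.2 (by linarith [key u hu]))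
    · exact Continuous.continuousOn (by continuity)
  rw [integral_eq_sub_of_hasDerivAt hderiv (hcont.intervalIntegrable)]
  simp

lemma integral_at_one (l : ℕ) :
    (∫ u in (0 : ℝ)..1,
        u ^ l / Real.sqrt (1 - u ^ 2) *
          (1 - (((l : ℝ) + 2) / ((l : ℝ) + 1)) * u ^ 2)) = 0 := by
  have hc1 : ∀ u : ℝ, 0 ≤ u → u ≤ 1 → |1 - (((l : ℝ) + 2) / ((l : ℝ) + 1)) * u ^ 2| ≤ 1 := by
    intro u hu0 hu1
    have h1 : (0:ℝ) < (l:ℝ) + 1 := by positivity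
    have hc2 : (((l : ℝ) + 2) / ((l : ℝ) + 1)) ≤ 2 := by
      rw [div_le_iff₀ h1]; linarith
    have hc0 : (0:ℝ) ≤ (((l : ℝ) + 2) / ((l : ℝ) + 1)) := by positivity
    have hu2 : u ^ 2 ≤ 1 := by nlinarith
    rw [abs_le]
    constructor
    · nlinarith [mul_le_mul hc2 hu2 (by positivity) (by norm_num : (0:ℝ) ≤ 2)]
    · nlinarith [mul_nonneg hc0 (sq_nonneg u)]
  have hg_int : IntervalIntegrable (fun u : ℝ => (1 - u) ^ (-(1/2) : ℝ)) volume 0 1 := by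
    have := (intervalIntegrable_rpow' (a := 0) (b := 1)
      (r := (-(1/2) : ℝ)) (by norm_num)).comp_sub_left 1
    simpa using this.symm
  have hint : IntervalIntegrable (fun u : ℝ =>
      u ^ l / Real.sqrt (1 - u ^ 2) *
        (1 - (((l : ℝ) + 2) / ((l : ℝ) + 1)) * u ^ 2)) volume 0 1 := by
    apply hg_int.mono_fun'
    · apply Measurable.aestronglyMeasurable
      apply Measurable.mul
      · exact (measurable_id.pow_const l).div
          ((measurable_const.sub (measurable_id.pow_const 2)).sqrt)
      · exact measurable_const.sub (measurable_const.mul (measurable_id.pow_const 2))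
    · filter_upwards [ae_restrict_mem measurableSet_uIoc] with u hu
      rw [Set.uIoc_of_le (by norm_num : (0:ℝ) ≤ 1)] at hu
      obtain ⟨hu0, hu1⟩ := hu
      rcases eq_or_lt_of_le hu1 with h1 | h1
      · subst h1
        simp [Real.zero_rpow (by norm_num : (-(1/2) : ℝ) ≠ 0)]
      · have h1u : 0 < 1 - u := by linarith
        have h1u2 : 0 < 1 - u ^ 2 := by nlinarith
        have hsqrt_le : Real.sqrt (1 - u) ≤ Real.sqrt (1 - u ^ 2) :=
          Real.sqrt_le_sqrt (by nlinarith)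
        have hsp : 0 < Real.sqrt (1 - u) := Real.sqrt_pos.2 h1u
        have hsp2 : 0 < Real.sqrt (1 - u ^ 2) := Real.sqrt_pos.2 h1u2
        have hrw : (1 - u) ^ (-(1/2) : ℝ) = (Real.sqrt (1 - u))⁻¹ := by
          rw [Real.rpow_neg h1u.le, ← Real.sqrt_eq_rpow]
        rw [hrw]
        have hul : u ^ l ≤ 1 := pow_le_one₀ hu0.le hu1
        have habs : |1 - (((l : ℝ) + 2) / ((l : ℝ) + 1)) * u ^ 2| ≤ 1 :=
          hc1 u hu0.le hu1
        rw [norm_mul, norm_div, Real.norm_eq_abs, Real.norm_eq_abs,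
          Real.norm_eq_abs, abs_of_nonneg hsp2.le,
          abs_of_nonneg (pow_nonneg hu0.le l)]
        calc u ^ l / Real.sqrt (1 - u ^ 2) *
              |1 - (((l : ℝ) + 2) / ((l : ℝ) + 1)) * u ^ 2|
            ≤ 1 / Real.sqrt (1 - u) * 1 := by
              apply mul_le_mul _ habs (abs_nonneg _) (by positivity)
              exact div_le_div₀ (by norm_num) hul hsp hsqrt_le
          _ = (Real.sqrt (1 - u))⁻¹ := by rw [mul_one, one_div]
  have hcont : Continuous (fun u : ℝ => u ^ (l + 1) * Real.sqrt (1 - 1 ^ 2 * u ^ 2) / ((l : ℝ) + 1)) := by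
    continuity
  have hderiv : ∀ u ∈ Set.Ioo (0 : ℝ) 1,
      HasDerivAt (fun u : ℝ => u ^ (l + 1) * Real.sqrt (1 - 1 ^ 2 * u ^ 2) / ((l : ℝ) + 1))
        (u ^ l / Real.sqrt (1 - u ^ 2) *
          (1 - (((l : ℝ) + 2) / ((l : ℝ) + 1)) * u ^ 2)) u := by
    intro u hu
    have := hasDerivAt_F l 1 u (by nlinarith [hu.1, hu.2] : 1 ^ 2 * u ^ 2 < 1)
    simpa using this
  have := integral_eq_sub_of_hasDerivAt_of_le (by norm_num : (0:ℝ) ≤ 1)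
    hcont.continuousOn hderiv hint
  rw [this]
  norm_num

/-- For `ℓ` even, the integral `I(x) = ∫_0^1 (u^ℓ/√(1-x²u²))(1 - ((ℓ+2)/(ℓ+1))x²u²) du`
is strictly positive on `(0,1)`, vanishes at `x = 1`, and is strictly decreasing
on `(0,1)`. -/
theorem integral_positive_vanishing_antitone (l : ℕ) (hl : Even l) :
    (∀ x : ℝ, x ∈ Set.Ioo (0 : ℝ) 1 →
        0 < ∫ u in (0 : ℝ)..1,
          u ^ l / Real.sqrt (1 - x ^ 2 * u ^ 2) *
            (1 - (((l : ℝ) + 2) / ((l : ℝ) + 1)) * x ^ 2 * u ^ 2)) ∧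
    (∫ u in (0 : ℝ)..1,
        u ^ l / Real.sqrt (1 - u ^ 2) *
          (1 - (((l : ℝ) + 2) / ((l : ℝ) + 1)) * u ^ 2)) = 0 ∧
    StrictAntiOn (fun x : ℝ =>
        ∫ u in (0 : ℝ)..1,
          u ^ l / Real.sqrt (1 - x ^ 2 * u ^ 2) *
            (1 - (((l : ℝ) + 2) / ((l : ℝ) + 1)) * x ^ 2 * u ^ 2))
      (Set.Ioo (0 : ℝ) 1) := by
  refine ⟨?_, integral_at_one l, ?_⟩
  · intro x hx
    rw [integral_eq_inner l x hx]
    have : 0 < 1 - x ^ 2 := by nlinarith [hx.1, hx.2]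
    positivity
  · intro x hx y hy hxy
    simp only
    rw [integral_eq_inner l x hx, integral_eq_inner l y hy]
    have h1 : 0 ≤ 1 - y ^ 2 := by nlinarith [hy.1, hy.2]
    have h2 : 1 - y ^ 2 < 1 - x ^ 2 := by nlinarith [hx.1, hy.1]
    have := Real.sqrt_lt_sqrt h1 h2
    exact div_lt_div_of_pos_right this (by positivity)
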